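/- Let α>1, β>1, C₁>1. There exists a constant C' depending only on (α,β,C₁) such that for every positive nonincreasing sequence (κ_k)_{k≥1} satisfying κ_k ≤ C₁k^{−α} and κ_k − κ_{k+1} ≥ C₁^{−1}k^{−α−1} for all k ≥ 1, and every k ≥ 2, one has Σ_{ℓ≥1, ℓ≠k} ℓ^{−β}/|κ_k − κ_ℓ| ≤ C'·(1 + k^{α−β+1} log k). Moreover, if β > α+1, the same sum is bounded by C' uniformly in k ≥ 2. -/

import Mathlib

lemma rpow_neg_sub_lower {s a b : ℝ} (hs : 0 < s) (ha : 0 < a) (hab : a ≤ b) :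
    s * (b - a) * b ^ (-s - 1) ≤ a ^ (-s) - b ^ (-s) := by
  have hb : 0 < b := lt_of_lt_of_le ha hab
  set t : ℝ := (b - a) / a with htdef
  have ht : 0 ≤ t := div_nonneg (by linarith) ha.le
  have hat : a * t = b - a := by rw [htdef]; field_simp
  have h1t : 1 + t = b / a := by rw [htdef]; field_simp; ring
  have hbern : 1 + (s + 1) * t ≤ (1 + t) ^ (s + 1) :=
    one_add_mul_self_le_rpow_one_add (by linarith) (by linarith)
  have hbpow : (0:ℝ) < b ^ (s + 1) := Real.rpow_pos_of_pos hb _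
  rw [← mul_le_mul_iff_of_pos_right hbpow]
  have e1 : s * (b - a) * b ^ (-s - 1) * b ^ (s + 1) = s * (b - a) := by
    rw [mul_assoc, ← Real.rpow_add hb]
    norm_num
  have e2 : (a ^ (-s) - b ^ (-s)) * b ^ (s + 1)
      = a ^ (-s) * b ^ (s + 1) - b := by
    rw [sub_mul, ← Real.rpow_add hb]
    norm_num
  rw [e1, e2]
  have e3 : a ^ (-s) * b ^ (s + 1) = a * (1 + t) ^ (s + 1) := by
    rw [h1t, Real.div_rpow hb.le ha.le, mul_div_assoc',
      eq_div_iff (ne_of_gt (Real.rpow_pos_of_pos ha _)), mul_assoc,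
      mul_comm (b ^ (s+1)), ← mul_assoc, ← Real.rpow_add ha,
      show -s + (s+1) = 1 by ring, Real.rpow_one]
  have hbt : b = a * (1 + t) := by rw [h1t]; field_simp
  rw [e3]
  have h5 : a * (1 + (s + 1) * t) ≤ a * ((1 + t) ^ (s + 1)) :=
    mul_le_mul_of_nonneg_left hbern ha.le
  nlinarith [h5, hat]

lemma sum_inv_le_one_add_log (n : ℕ) :
    ∑ j ∈ Finset.Icc 1 n, (1 / (j:ℝ)) ≤ 1 + Real.log n := by
  have h := harmonic_le_one_add_log n
  rw [harmonic_eq_sum_Icc] at h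
  push_cast at h
  simpa [one_div] using h

lemma tail_rpow_le (β : ℝ) (hβ : 1 < β) (m : ℕ) (hm : 2 ≤ m) :
    ∑' ℓ : ℕ, (if m ≤ ℓ then (ℓ:ℝ) ^ (-β) else 0)
      ≤ ((m:ℝ) - 1) ^ (1 - β) / (β - 1) := by
  have hsummaj : Summable (fun ℓ : ℕ => (ℓ:ℝ) ^ (-β)) :=
    Real.summable_nat_rpow.mpr (by linarith)
  have hs : Summable (fun ℓ : ℕ => if m ≤ ℓ then (ℓ:ℝ) ^ (-β) else 0) := by
    apply Summable.of_nonneg_of_le (fun ℓ => by positivity)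
      (fun ℓ => ?_) hsummaj
    split
    · exact le_rfl
    · positivity
  apply Summable.tsum_le_of_sum_le hs
  intro s
  set N : ℕ := max ((s.sup id) + 1) m with hN
  have hsub : s ⊆ Finset.range N := by
    intro x hx
    simp only [Finset.mem_range, hN]
    have : x ≤ s.sup id := Finset.le_sup (f := id) hx
    omega
  have step1 : ∑ ℓ ∈ s, (if m ≤ ℓ then (ℓ:ℝ) ^ (-β) else 0)
      ≤ ∑ ℓ ∈ Finset.range N, (if m ≤ ℓ then (ℓ:ℝ) ^ (-β) else 0) := by
    apply Finset.sum_le_sum_of_subset_of_nonneg hsub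
    intro i _ _; positivity
  have hfilter : (Finset.range N).filter (fun ℓ => m ≤ ℓ) = Finset.Ico m N := by
    ext x; simp [Finset.mem_filter, Finset.mem_range, Finset.mem_Ico, and_comm]
  have step2 : ∑ ℓ ∈ Finset.range N, (if m ≤ ℓ then (ℓ:ℝ) ^ (-β) else 0)
      = ∑ ℓ ∈ Finset.Ico m N, (ℓ:ℝ) ^ (-β) := by
    rw [← hfilter, Finset.sum_filter]
  -- pointwise telescoping bound
  set F : ℕ → ℝ := fun j => ((m - 1 + j : ℕ) : ℝ) ^ (1 - β) with hF
  have hmN : m ≤ N := le_max_right _ _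
  have step3 : ∑ ℓ ∈ Finset.Ico m N, (ℓ:ℝ) ^ (-β)
      ≤ ∑ j ∈ Finset.range (N - m), (1/(β-1)) * (F j - F (j+1)) := by
    rw [Finset.sum_Ico_eq_sum_range]
    apply Finset.sum_le_sum
    intro j _
    have hcast1 : ((m - 1 + j : ℕ) : ℝ) = (m + j : ℕ) - 1 := by
      have : 1 ≤ m := by omega
      push_cast [Nat.cast_sub this]
      ring
    have hcast2 : (m - 1 + (j+1) : ℕ) = (m + j : ℕ) := by omega
    have hpos : (0:ℝ) < (m + j : ℕ) - 1 := by
      have : (2:ℝ) ≤ (m + j : ℕ) := by exact_mod_cast le_trans hm (by omega)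
      linarith
    have key := rpow_neg_sub_lower (s := β - 1) (a := ((m + j : ℕ):ℝ) - 1)
      (b := ((m + j : ℕ):ℝ)) (by linarith) hpos (by linarith)
    rw [hF]
    simp only [hcast1, hcast2]
    rw [show -(β - 1) - 1 = -β by ring] at key
    rw [show -(β - 1) = 1 - β by ring] at key
    rw [div_mul_eq_mul_div, le_div_iff₀ (by linarith : (0:ℝ) < β - 1)]
    calc ((m + j:ℕ):ℝ) ^ (-β) * (β - 1)
        = (β - 1) * (((m+j:ℕ):ℝ) - (((m+j:ℕ):ℝ) - 1)) * ((m+j:ℕ):ℝ) ^ (-β) := by ring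
      _ ≤ (((m+j:ℕ):ℝ) - 1) ^ (1-β) - ((m+j:ℕ):ℝ) ^ (1-β) := key
      _ = 1 * ((((m+j:ℕ):ℝ) - 1) ^ (1-β) - ((m+j:ℕ):ℝ) ^ (1-β)) := by ring
  have step4 : ∑ j ∈ Finset.range (N - m), (1/(β-1)) * (F j - F (j+1))
      = (1/(β-1)) * (F 0 - F (N - m)) := by
    rw [← Finset.mul_sum, Finset.sum_range_sub' F]
  have hF0 : F 0 = ((m:ℝ) - 1) ^ (1 - β) := by
    rw [hF]
    have : 1 ≤ m := by omega
    simp only [add_zero]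
    rw [Nat.cast_sub this]
    norm_num
  have hFN : 0 ≤ F (N - m) := Real.rpow_nonneg (by positivity) _
  calc ∑ ℓ ∈ s, (if m ≤ ℓ then (ℓ:ℝ) ^ (-β) else 0)
      ≤ ∑ ℓ ∈ Finset.Ico m N, (ℓ:ℝ) ^ (-β) := by rw [← step2]; exact step1
    _ ≤ ∑ j ∈ Finset.range (N - m), (1/(β-1)) * (F j - F (j+1)) := step3
    _ = (1/(β-1)) * (F 0 - F (N - m)) := step4
    _ ≤ (1/(β-1)) * F 0 := by
        apply mul_le_mul_of_nonneg_left _ (one_div_nonneg.mpr (by linarith))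
        linarith
    _ = ((m:ℝ) - 1) ^ (1 - β) / (β - 1) := by rw [hF0]; ring

set_option maxHeartbeats 3200000 in
/-- For `α > 1`, `β > 1`, `C₁ > 1`, there is a constant `C'` depending only on
`(α, β, C₁)` such that for every positive nonincreasing sequence `(κ_k)_{k ≥ 1}` with
`κ_k ≤ C₁ k^{−α}` and `κ_k − κ_{k+1} ≥ C₁⁻¹ k^{−α−1}` for all `k ≥ 1`, and every `k ≥ 2`,
the sum `Σ_{ℓ ≥ 1, ℓ ≠ k} ℓ^{−β} / |κ_k − κ_ℓ|` is finite and bounded by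
`C' (1 + k^{α−β+1} log k)`; moreover if `β > α + 1` it is bounded by `C'` uniformly. -/
theorem resolvent_sum_bound (α β C₁ : ℝ) (hα : 1 < α) (hβ : 1 < β) (hC₁ : 1 < C₁) :
    ∃ C' > 0, ∀ κ : ℕ → ℝ,
      (∀ k : ℕ, 1 ≤ k → 0 < κ k) →
      (∀ k l : ℕ, 1 ≤ k → k ≤ l → κ l ≤ κ k) →
      (∀ k : ℕ, 1 ≤ k → κ k ≤ C₁ * (k : ℝ) ^ (-α)) →
      (∀ k : ℕ, 1 ≤ k → κ k - κ (k + 1) ≥ C₁⁻¹ * (k : ℝ) ^ (-α - 1)) →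
      ∀ k : ℕ, 2 ≤ k →
        (Summable (fun l : ℕ =>
            if 1 ≤ l ∧ l ≠ k then (l : ℝ) ^ (-β) / |κ k - κ l| else 0) ∧
          (∑' l : ℕ, if 1 ≤ l ∧ l ≠ k then (l : ℝ) ^ (-β) / |κ k - κ l| else 0)
            ≤ C' * (1 + (k : ℝ) ^ (α - β + 1) * Real.log k)) ∧
        (β > α + 1 →
          (∑' l : ℕ, if 1 ≤ l ∧ l ≠ k then (l : ℝ) ^ (-β) / |κ k - κ l| else 0)
            ≤ C') := by
  classical
  have hC₁pos : (0:ℝ) < C₁ := by linarith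
  have cinv : (0:ℝ) < C₁⁻¹ := by positivity
  obtain ⟨D, hD⟩ : ∃ D : ℝ, D = C₁ * 2 ^ (α + 1) := ⟨_, rfl⟩
  obtain ⟨E, hE⟩ : ∃ E : ℝ, E = C₁ * 2 ^ β := ⟨_, rfl⟩
  have hDpos : 0 < D := by
    rw [hD]
    have := Real.rpow_pos_of_pos (by norm_num : (0:ℝ) < 2) (α + 1)
    positivity
  have hEpos : 0 < E := by
    rw [hE]
    have := Real.rpow_pos_of_pos (by norm_num : (0:ℝ) < 2) β
    positivity
  have hlog2 : 0 < Real.log 2 := Real.log_pos (by norm_num)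
  obtain ⟨L, hL⟩ : ∃ L : ℝ, L = 1 + 1 / Real.log 2 := ⟨_, rfl⟩
  have hLpos : 0 < L := by rw [hL]; positivity
  obtain ⟨S, hS⟩ : ∃ S : ℝ, S = ∑' ℓ : ℕ, (if 1 ≤ ℓ then (ℓ:ℝ) ^ (α - β) else 0) :=
    ⟨_, rfl⟩
  have hSnn : 0 ≤ S := hS ▸ tsum_nonneg (fun ℓ => by positivity)
  obtain ⟨C₀, hC₀⟩ : ∃ C₀ : ℝ, C₀ = 2 * D + E + D / (β - 1) := ⟨_, rfl⟩
  have hC₀pos : 0 < C₀ := by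
    have h1 : 0 < D / (β - 1) := div_pos hDpos (by linarith)
    rw [hC₀]; linarith
  obtain ⟨ε, hε⟩ : ∃ ε : ℝ, ε = (β - α - 1) / 2 := ⟨_, rfl⟩
  obtain ⟨C', hC'⟩ : ∃ C' : ℝ, C' = D * S + C₀ * (L + 1 + max (1/ε) 0) := ⟨_, rfl⟩
  have hmaxnn : (0:ℝ) ≤ max (1/ε) 0 := le_max_right _ _
  have hC'pos : 0 < C' := by
    have h1 : 0 < C₀ * (L + 1 + max (1/ε) 0) := mul_pos hC₀pos (by linarith)
    have h2 : 0 ≤ D * S := mul_nonneg hDpos.le hSnn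
    rw [hC']; linarith
  refine ⟨C', hC'pos, ?_⟩
  intro κ hpos hmono hup hgap k hk
  have hk1 : 1 ≤ k := by omega
  have hkR2 : (2:ℝ) ≤ (k:ℝ) := by exact_mod_cast hk
  have hkpos : (0:ℝ) < k := by linarith
  have hlogk : Real.log 2 ≤ Real.log k := Real.log_le_log (by norm_num) hkR2
  have hlogkpos : 0 < Real.log k := lt_of_lt_of_le hlog2 hlogk
  have h1logk : 1 + Real.log k ≤ L * Real.log k := by
    have h := (one_le_div hlog2).mpr hlogk
    have h2 : L * Real.log k - Real.log k = Real.log k / Real.log 2 := by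
      rw [hL]; field_simp; ring
    linarith
  -- telescoping lower bound
  have T : ∀ a b : ℕ, 1 ≤ a → a < b →
      C₁⁻¹ * ((b:ℝ) - (a:ℝ)) * (b:ℝ) ^ (-α - 1) ≤ κ a - κ b := by
    intro a b ha hab
    have htel : κ a - κ b = ∑ i ∈ Finset.range (b - a), (κ (a + i) - κ (a + (i + 1))) := by
      have h := Finset.sum_range_sub' (fun i => κ (a + i)) (b - a)
      simp only [add_zero] at h
      rw [h, show a + (b - a) = b by omega]
    rw [htel]
    have hterm : ∀ i ∈ Finset.range (b - a),
        C₁⁻¹ * (b:ℝ) ^ (-α - 1) ≤ κ (a + i) - κ (a + (i + 1)) := by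
      intro i hi
      simp only [Finset.mem_range] at hi
      have h1 : 1 ≤ a + i := by omega
      have h2 : ((a + i : ℕ):ℝ) ≤ (b:ℝ) := by exact_mod_cast by omega
      have h3 : (0:ℝ) < ((a + i : ℕ):ℝ) := by exact_mod_cast h1
      have h4 : (b:ℝ) ^ (-α - 1) ≤ ((a + i : ℕ):ℝ) ^ (-α - 1) :=
        Real.rpow_le_rpow_of_nonpos h3 h2 (by linarith)
      calc C₁⁻¹ * (b:ℝ) ^ (-α - 1) ≤ C₁⁻¹ * ((a + i : ℕ):ℝ) ^ (-α - 1) :=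
            mul_le_mul_of_nonneg_left h4 cinv.le
        _ ≤ κ (a + i) - κ (a + (i + 1)) := hgap (a + i) h1
    calc C₁⁻¹ * ((b:ℝ) - (a:ℝ)) * (b:ℝ) ^ (-α - 1)
        = (b - a : ℕ) * (C₁⁻¹ * (b:ℝ) ^ (-α - 1)) := by
          rw [Nat.cast_sub hab.le]; ring
      _ = ∑ _i ∈ Finset.range (b - a), C₁⁻¹ * (b:ℝ) ^ (-α - 1) := by
          rw [Finset.sum_const, Finset.card_range, nsmul_eq_mul]
      _ ≤ ∑ i ∈ Finset.range (b - a), (κ (a + i) - κ (a + (i + 1))) :=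
          Finset.sum_le_sum hterm
  have T2 : ∀ m : ℕ, 1 ≤ m →
      C₁⁻¹ * 2 ^ (-α - 1) * (m:ℝ) ^ (-α) ≤ κ m - κ (2 * m) := by
    intro m hm
    have hmpos : (0:ℝ) < m := by exact_mod_cast hm
    have h := T m (2 * m) hm (by omega)
    have hcast : ((2 * m : ℕ):ℝ) = 2 * (m:ℝ) := by push_cast; ring
    rw [hcast] at h
    have h2 : (2 * (m:ℝ)) ^ (-α - 1) = 2 ^ (-α - 1) * (m:ℝ) ^ (-α - 1) :=
      Real.mul_rpow (by norm_num) hmpos.le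
    have h3 : (m:ℝ) * (m:ℝ) ^ (-α - 1) = (m:ℝ) ^ (-α) := by
      nth_rewrite 1 [← Real.rpow_one (m:ℝ)]
      rw [← Real.rpow_add hmpos, show 1 + (-α - 1) = -α by ring]
    calc C₁⁻¹ * 2 ^ (-α - 1) * (m:ℝ) ^ (-α)
        = C₁⁻¹ * (2 * (m:ℝ) - (m:ℝ)) * (2 * (m:ℝ)) ^ (-α - 1) := by
          rw [h2, ← h3]; ring
      _ ≤ κ m - κ (2 * m) := h
  -- constants algebra
  have two_pos' : (0:ℝ) < 2 := by norm_num
  have h2α : (2:ℝ) ^ (α + 1) * 2 ^ (-α - 1) = 1 := by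
    rw [← Real.rpow_add two_pos', show α + 1 + (-α - 1) = 0 by ring, Real.rpow_zero]
  have hDc : D * (C₁⁻¹ * 2 ^ (-α - 1)) = 1 := by
    rw [hD, show C₁ * 2 ^ (α + 1) * (C₁⁻¹ * 2 ^ (-α - 1))
        = C₁ * C₁⁻¹ * (2 ^ (α + 1) * 2 ^ (-α - 1)) by ring,
      mul_inv_cancel₀ (ne_of_gt hC₁pos), h2α, one_mul]
  have hEc : E * C₁⁻¹ = 2 ^ β := by
    rw [hE, mul_comm C₁, mul_assoc, mul_inv_cancel₀ (ne_of_gt hC₁pos), mul_one]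
  have cpos : 0 < C₁⁻¹ * 2 ^ (-α - 1) :=
    mul_pos cinv (Real.rpow_pos_of_pos two_pos' _)
  -- the functions
  obtain ⟨f, hf⟩ : ∃ f : ℕ → ℝ,
      f = fun l : ℕ => if 1 ≤ l ∧ l ≠ k then (l:ℝ) ^ (-β) / |κ k - κ l| else 0 := ⟨_, rfl⟩
  obtain ⟨g₁, hg₁⟩ : ∃ g : ℕ → ℝ,
      g = fun l : ℕ => if 1 ≤ l ∧ 2*l ≤ k then D * (l:ℝ) ^ (α - β) else 0 := ⟨_, rfl⟩
  obtain ⟨g₂, hg₂⟩ : ∃ g : ℕ → ℝ,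
      g = fun l : ℕ => if k < 2*l ∧ l < k then
        E * (k:ℝ) ^ (α - β + 1) * (1/((k - l : ℕ):ℝ)) else 0 := ⟨_, rfl⟩
  obtain ⟨g₃, hg₃⟩ : ∃ g : ℕ → ℝ,
      g = fun l : ℕ => if k < l ∧ l < 2*k then
        D * (k:ℝ) ^ (α - β + 1) * (1/((l - k : ℕ):ℝ)) else 0 := ⟨_, rfl⟩
  obtain ⟨g₄, hg₄⟩ : ∃ g : ℕ → ℝ,
      g = fun l : ℕ => if 2*k ≤ l then D * (k:ℝ) ^ α * (l:ℝ) ^ (-β) else 0 := ⟨_, rfl⟩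
  have hnn₁ : ∀ l, 0 ≤ g₁ l := by
    intro l; simp only [hg₁]; split
    · exact mul_nonneg hDpos.le (Real.rpow_nonneg (Nat.cast_nonneg l) _)
    · exact le_rfl
  have hnn₂ : ∀ l, 0 ≤ g₂ l := by
    intro l; simp only [hg₂]; split
    · exact mul_nonneg (mul_nonneg hEpos.le (Real.rpow_nonneg hkpos.le _))
        (by positivity)
    · exact le_rfl
  have hnn₃ : ∀ l, 0 ≤ g₃ l := by
    intro l; simp only [hg₃]; split
    · exact mul_nonneg (mul_nonneg hDpos.le (Real.rpow_nonneg hkpos.le _))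
        (by positivity)
    · exact le_rfl
  have hnn₄ : ∀ l, 0 ≤ g₄ l := by
    intro l; simp only [hg₄]; split
    · exact mul_nonneg (mul_nonneg hDpos.le (Real.rpow_nonneg hkpos.le _))
        (Real.rpow_nonneg (Nat.cast_nonneg l) _)
    · exact le_rfl
  have hfnn : ∀ l, 0 ≤ f l := by
    intro l; simp only [hf]; split
    · exact div_nonneg (Real.rpow_nonneg (Nat.cast_nonneg l) _) (abs_nonneg _)
    · exact le_rfl
  -- regime A
  have hRA : ∀ l : ℕ, 1 ≤ l → 2*l ≤ k → f l ≤ g₁ l := by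
    intro l h1 h2
    have hlk : l ≠ k := by omega
    have hlpos : (0:ℝ) < l := by exact_mod_cast h1
    have hmono2 : κ l - κ (2*l) ≤ κ l - κ k := by
      have := hmono (2*l) k (by omega) h2; linarith
    have hlow : C₁⁻¹ * 2 ^ (-α-1) * (l:ℝ) ^ (-α) ≤ κ l - κ k :=
      le_trans (T2 l h1) hmono2
    have hdpos : 0 < κ l - κ k :=
      lt_of_lt_of_le (mul_pos cpos (Real.rpow_pos_of_pos hlpos _))
        (by rw [show C₁⁻¹ * 2 ^ (-α-1) * (l:ℝ) ^ (-α)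
            = C₁⁻¹ * 2 ^ (-α-1) * (l:ℝ) ^ (-α) from rfl] at hlow ⊢; exact hlow)
    have habs : |κ k - κ l| = κ l - κ k := by
      rw [abs_sub_comm]; exact abs_of_pos hdpos
    have e1 : f l = (l:ℝ) ^ (-β) / (κ l - κ k) := by
      simp only [hf]; rw [if_pos ⟨h1, hlk⟩, habs]
    have e2 : g₁ l = D * (l:ℝ) ^ (α - β) := by
      simp only [hg₁]; rw [if_pos ⟨h1, h2⟩]
    rw [e1, e2, div_le_iff₀ hdpos]
    have hll : (l:ℝ) ^ (α - β) * (l:ℝ) ^ (-α) = (l:ℝ) ^ (-β) := by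
      rw [← Real.rpow_add hlpos, show α - β + -α = -β by ring]
    calc (l:ℝ) ^ (-β)
        = D * (l:ℝ) ^ (α - β) * (C₁⁻¹ * 2 ^ (-α-1) * (l:ℝ) ^ (-α)) := by
          rw [show D * (l:ℝ) ^ (α - β) * (C₁⁻¹ * 2 ^ (-α-1) * (l:ℝ) ^ (-α))
              = D * (C₁⁻¹ * 2 ^ (-α-1)) * ((l:ℝ) ^ (α - β) * (l:ℝ) ^ (-α)) by ring,
            hDc, hll, one_mul]
      _ ≤ D * (l:ℝ) ^ (α - β) * (κ l - κ k) :=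
          mul_le_mul_of_nonneg_left hlow
            (mul_nonneg hDpos.le (Real.rpow_nonneg hlpos.le _))
  -- regime B
  have hRB : ∀ l : ℕ, k < 2*l → l < k → f l ≤ g₂ l := by
    intro l h1 h2
    have hl1 : 1 ≤ l := by omega
    have hlk : l ≠ k := by omega
    have hlpos : (0:ℝ) < l := by exact_mod_cast hl1
    have hlR : (l:ℝ) < k := by exact_mod_cast h2
    have hklpos : (0:ℝ) < (k:ℝ) - l := by linarith
    have hlow : C₁⁻¹ * ((k:ℝ) - l) * (k:ℝ) ^ (-α-1) ≤ κ l - κ k := T l k hl1 h2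
    have hdpos : 0 < κ l - κ k :=
      lt_of_lt_of_le (mul_pos (mul_pos cinv hklpos) (Real.rpow_pos_of_pos hkpos _)) hlow
    have habs : |κ k - κ l| = κ l - κ k := by
      rw [abs_sub_comm]; exact abs_of_pos hdpos
    have hcast : ((k - l : ℕ):ℝ) = (k:ℝ) - l := by
      rw [Nat.cast_sub h2.le]
    have e1 : f l = (l:ℝ) ^ (-β) / (κ l - κ k) := by
      simp only [hf]; rw [if_pos ⟨hl1, hlk⟩, habs]
    have e2 : g₂ l = E * (k:ℝ) ^ (α - β + 1) * (1/((k:ℝ) - l)) := by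
      simp only [hg₂]; rw [if_pos ⟨h1, h2⟩, hcast]
    rw [e1, e2, div_le_iff₀ hdpos]
    have hhalf : (k:ℝ)/2 ≤ l := by
      have : (k:ℝ) < 2*l := by exact_mod_cast h1
      linarith
    have hstepA : (l:ℝ) ^ (-β) ≤ 2 ^ β * (k:ℝ) ^ (-β) := by
      have h2k : (0:ℝ) < (k:ℝ)/2 := by linarith
      have hmono3 : (l:ℝ) ^ (-β) ≤ ((k:ℝ)/2) ^ (-β) :=
        Real.rpow_le_rpow_of_nonpos h2k hhalf (by linarith)
      have hsplit : ((k:ℝ)/2) ^ (-β) = 2 ^ β * (k:ℝ) ^ (-β) := by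
        rw [div_eq_mul_inv, Real.mul_rpow hkpos.le (by norm_num : (0:ℝ) ≤ 2⁻¹),
          Real.inv_rpow (le_of_lt two_pos'), Real.rpow_neg (le_of_lt two_pos'), inv_inv]
        ring
      linarith [hsplit ▸ hmono3]
    have hkk : (k:ℝ) ^ (α - β + 1) * (k:ℝ) ^ (-α-1) = (k:ℝ) ^ (-β) := by
      rw [← Real.rpow_add hkpos, show α - β + 1 + (-α-1) = -β by ring]
    have hfrac : (1/((k:ℝ) - l)) * ((k:ℝ) - l) = 1 := by
      field_simp
    have hprod : E * (k:ℝ) ^ (α - β + 1) * (1/((k:ℝ) - l))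
        * (C₁⁻¹ * ((k:ℝ) - l) * (k:ℝ) ^ (-α-1)) = 2 ^ β * (k:ℝ) ^ (-β) := by
      calc E * (k:ℝ) ^ (α - β + 1) * (1/((k:ℝ) - l))
            * (C₁⁻¹ * ((k:ℝ) - l) * (k:ℝ) ^ (-α-1))
          = E * C₁⁻¹ * ((k:ℝ) ^ (α - β + 1) * (k:ℝ) ^ (-α-1))
            * ((1/((k:ℝ) - l)) * ((k:ℝ) - l)) := by ring
        _ = 2 ^ β * (k:ℝ) ^ (-β) := by rw [hEc, hkk, hfrac, mul_one]
    calc (l:ℝ) ^ (-β) ≤ 2 ^ β * (k:ℝ) ^ (-β) := hstepA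
      _ = E * (k:ℝ) ^ (α - β + 1) * (1/((k:ℝ) - l))
          * (C₁⁻¹ * ((k:ℝ) - l) * (k:ℝ) ^ (-α-1)) := hprod.symm
      _ ≤ E * (k:ℝ) ^ (α - β + 1) * (1/((k:ℝ) - l)) * (κ l - κ k) := by
          apply mul_le_mul_of_nonneg_left hlow
          exact mul_nonneg (mul_nonneg hEpos.le (Real.rpow_nonneg hkpos.le _))
            (by positivity)
  -- regime C
  have hRC : ∀ l : ℕ, k < l → l < 2*k → f l ≤ g₃ l := by
    intro l h1 h2
    have hl1 : 1 ≤ l := by omega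
    have hlk : l ≠ k := by omega
    have hlpos : (0:ℝ) < l := by positivity
    have hkl : (k:ℝ) < l := by exact_mod_cast h1
    have hlkpos : (0:ℝ) < (l:ℝ) - k := by linarith
    have hl2k : (l:ℝ) ≤ 2*k := by
      have : (l:ℝ) < ((2*k : ℕ):ℝ) := by exact_mod_cast h2
      push_cast at this; linarith
    have hlow0 : C₁⁻¹ * ((l:ℝ) - k) * (l:ℝ) ^ (-α-1) ≤ κ k - κ l := T k l hk1 h1
    have hrr : 2 ^ (-α-1) * (k:ℝ) ^ (-α-1) ≤ (l:ℝ) ^ (-α-1) := by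
      have h2k0 : (0:ℝ) < 2*(k:ℝ) := by linarith
      have := Real.rpow_le_rpow_of_nonpos hlpos hl2k (by linarith : -α-1 ≤ 0)
      -- this : (2*k)^(-α-1) ≤ l^(-α-1)  -- wrong direction? l ≤ 2k gives (2k)^e ≤ l^e for e ≤ 0
      rwa [Real.mul_rpow (le_of_lt two_pos') hkpos.le] at this
    have hlow : C₁⁻¹ * ((l:ℝ) - k) * (2 ^ (-α-1) * (k:ℝ) ^ (-α-1)) ≤ κ k - κ l :=
      le_trans (mul_le_mul_of_nonneg_left hrr (mul_pos cinv hlkpos).le) hlow0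
    have hdpos : 0 < κ k - κ l :=
      lt_of_lt_of_le (mul_pos (mul_pos cinv hlkpos)
        (mul_pos (Real.rpow_pos_of_pos two_pos' _) (Real.rpow_pos_of_pos hkpos _))) hlow
    have habs : |κ k - κ l| = κ k - κ l := abs_of_pos hdpos
    have hcast : ((l - k : ℕ):ℝ) = (l:ℝ) - k := by rw [Nat.cast_sub h1.le]
    have e1 : f l = (l:ℝ) ^ (-β) / (κ k - κ l) := by
      simp only [hf]; rw [if_pos ⟨hl1, hlk⟩, habs]
    have e2 : g₃ l = D * (k:ℝ) ^ (α - β + 1) * (1/((l:ℝ) - k)) := by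
      simp only [hg₃]; rw [if_pos ⟨h1, h2⟩, hcast]
    rw [e1, e2, div_le_iff₀ hdpos]
    have hstepA : (l:ℝ) ^ (-β) ≤ (k:ℝ) ^ (-β) :=
      Real.rpow_le_rpow_of_nonpos hkpos hkl.le (by linarith)
    have hkk : (k:ℝ) ^ (α - β + 1) * (k:ℝ) ^ (-α-1) = (k:ℝ) ^ (-β) := by
      rw [← Real.rpow_add hkpos, show α - β + 1 + (-α-1) = -β by ring]
    have hfrac : (1/((l:ℝ) - k)) * ((l:ℝ) - k) = 1 := by field_simp
    have hprod : D * (k:ℝ) ^ (α - β + 1) * (1/((l:ℝ) - k))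
        * (C₁⁻¹ * ((l:ℝ) - k) * (2 ^ (-α-1) * (k:ℝ) ^ (-α-1))) = (k:ℝ) ^ (-β) := by
      calc D * (k:ℝ) ^ (α - β + 1) * (1/((l:ℝ) - k))
            * (C₁⁻¹ * ((l:ℝ) - k) * (2 ^ (-α-1) * (k:ℝ) ^ (-α-1)))
          = D * (C₁⁻¹ * 2 ^ (-α-1)) * ((k:ℝ) ^ (α - β + 1) * (k:ℝ) ^ (-α-1))
            * ((1/((l:ℝ) - k)) * ((l:ℝ) - k)) := by ring
        _ = (k:ℝ) ^ (-β) := by rw [hDc, hkk, hfrac, one_mul, mul_one]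
    calc (l:ℝ) ^ (-β) ≤ (k:ℝ) ^ (-β) := hstepA
      _ = D * (k:ℝ) ^ (α - β + 1) * (1/((l:ℝ) - k))
          * (C₁⁻¹ * ((l:ℝ) - k) * (2 ^ (-α-1) * (k:ℝ) ^ (-α-1))) := hprod.symm
      _ ≤ D * (k:ℝ) ^ (α - β + 1) * (1/((l:ℝ) - k)) * (κ k - κ l) := by
          apply mul_le_mul_of_nonneg_left hlow
          exact mul_nonneg (mul_nonneg hDpos.le (Real.rpow_nonneg hkpos.le _))
            (by positivity)
  -- regime D
  have hRD : ∀ l : ℕ, 2*k ≤ l → f l ≤ g₄ l := by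
    intro l h1
    have hl1 : 1 ≤ l := by omega
    have hlk : l ≠ k := by omega
    have hlpos : (0:ℝ) < l := by positivity
    have hmono2 : κ k - κ (2*k) ≤ κ k - κ l := by
      have := hmono (2*k) l (by omega) h1; linarith
    have hlow : C₁⁻¹ * 2 ^ (-α-1) * (k:ℝ) ^ (-α) ≤ κ k - κ l :=
      le_trans (T2 k hk1) hmono2
    have hdpos : 0 < κ k - κ l :=
      lt_of_lt_of_le (mul_pos cpos (Real.rpow_pos_of_pos hkpos _)) hlow
    have habs : |κ k - κ l| = κ k - κ l := abs_of_pos hdpos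
    have e1 : f l = (l:ℝ) ^ (-β) / (κ k - κ l) := by
      simp only [hf]; rw [if_pos ⟨hl1, hlk⟩, habs]
    have e2 : g₄ l = D * (k:ℝ) ^ α * (l:ℝ) ^ (-β) := by
      simp only [hg₄]; rw [if_pos h1]
    rw [e1, e2, div_le_iff₀ hdpos]
    have hkk : (k:ℝ) ^ α * (k:ℝ) ^ (-α) = 1 := by
      rw [← Real.rpow_add hkpos, show α + -α = 0 by ring, Real.rpow_zero]
    have hprod : D * (k:ℝ) ^ α * (l:ℝ) ^ (-β) * (C₁⁻¹ * 2 ^ (-α-1) * (k:ℝ) ^ (-α))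
        = (l:ℝ) ^ (-β) := by
      calc D * (k:ℝ) ^ α * (l:ℝ) ^ (-β) * (C₁⁻¹ * 2 ^ (-α-1) * (k:ℝ) ^ (-α))
          = D * (C₁⁻¹ * 2 ^ (-α-1)) * ((k:ℝ) ^ α * (k:ℝ) ^ (-α)) * (l:ℝ) ^ (-β) := by
            ring
        _ = (l:ℝ) ^ (-β) := by rw [hDc, hkk, one_mul, one_mul]
    calc (l:ℝ) ^ (-β)
        = D * (k:ℝ) ^ α * (l:ℝ) ^ (-β) * (C₁⁻¹ * 2 ^ (-α-1) * (k:ℝ) ^ (-α)) :=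
          hprod.symm
      _ ≤ D * (k:ℝ) ^ α * (l:ℝ) ^ (-β) * (κ k - κ l) := by
          apply mul_le_mul_of_nonneg_left hlow
          exact mul_nonneg (mul_nonneg hDpos.le (Real.rpow_nonneg hkpos.le _))
            (Real.rpow_nonneg hlpos.le _)
  -- pointwise domination
  have hfG : ∀ l, f l ≤ g₁ l + g₂ l + g₃ l + g₄ l := by
    intro l
    by_cases hl : 1 ≤ l ∧ l ≠ k
    · have hcases : (1 ≤ l ∧ 2*l ≤ k) ∨ (k < 2*l ∧ l < k) ∨ (k < l ∧ l < 2*k)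
          ∨ (2*k ≤ l) := by omega
      rcases hcases with h | h | h | h
      · linarith [hRA l h.1 h.2, hnn₂ l, hnn₃ l, hnn₄ l]
      · linarith [hRB l h.1 h.2, hnn₁ l, hnn₃ l, hnn₄ l]
      · linarith [hRC l h.1 h.2, hnn₁ l, hnn₂ l, hnn₄ l]
      · linarith [hRD l h, hnn₁ l, hnn₂ l, hnn₃ l]
    · have : f l = 0 := by simp only [hf]; rw [if_neg hl]
      rw [this]
      have := hnn₁ l; have := hnn₂ l; have := hnn₃ l; have := hnn₄ l
      linarith
  -- summability
  have hsum₁ : Summable g₁ := by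
    apply summable_of_ne_finset_zero (s := Finset.range (k+1))
    intro l hl
    simp only [Finset.mem_range, not_lt] at hl
    simp only [hg₁]; rw [if_neg (by omega)]
  have hsum₂ : Summable g₂ := by
    apply summable_of_ne_finset_zero (s := Finset.range k)
    intro l hl
    simp only [Finset.mem_range, not_lt] at hl
    simp only [hg₂]; rw [if_neg (by omega)]
  have hsum₃ : Summable g₃ := by
    apply summable_of_ne_finset_zero (s := Finset.range (2*k))
    intro l hl
    simp only [Finset.mem_range, not_lt] at hl
    simp only [hg₃]; rw [if_neg (by omega)]
  have hsum₄ : Summable g₄ := by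
    refine Summable.of_nonneg_of_le hnn₄ (fun l => ?_)
      ((Real.summable_nat_rpow.mpr (by linarith : -β < (-1:ℝ))).mul_left (D * (k:ℝ) ^ α))
    simp only [hg₄]; split
    · exact le_rfl
    · exact mul_nonneg (mul_nonneg hDpos.le (Real.rpow_nonneg hkpos.le _))
        (Real.rpow_nonneg (Nat.cast_nonneg l) _)
  have hG : Summable (fun l => g₁ l + g₂ l + g₃ l + g₄ l) :=
    ((hsum₁.add hsum₂).add hsum₃).add hsum₄
  have hfsum : Summable f := Summable.of_nonneg_of_le hfnn hfG hG
  have htsplit : ∑' l, (g₁ l + g₂ l + g₃ l + g₄ l)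
      = (∑' l, g₁ l) + (∑' l, g₂ l) + (∑' l, g₃ l) + (∑' l, g₄ l) := by
    rw [Summable.tsum_add ((hsum₁.add hsum₂).add hsum₃) hsum₄,
      Summable.tsum_add (hsum₁.add hsum₂) hsum₃, Summable.tsum_add hsum₁ hsum₂]
  have hfle : ∑' l, f l ≤ (∑' l, g₁ l) + (∑' l, g₂ l) + (∑' l, g₃ l) + (∑' l, g₄ l) := by
    rw [← htsplit]; exact Summable.tsum_le_tsum hfG hfsum hG
  -- harmonic-type bounds
  have hharmB : ∀ F : Finset ℕ, (∀ l ∈ F, l < k) →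
      ∑ l ∈ F, (1/((k - l : ℕ):ℝ)) ≤ 1 + Real.log k := by
    intro F hF
    have hinj : ∀ x ∈ F, ∀ y ∈ F, k - x = k - y → x = y := by
      intro x hx y hy h
      have := hF x hx; have := hF y hy; omega
    have himg : ∑ j ∈ F.image (fun l => k - l), (1/(j:ℝ))
        = ∑ l ∈ F, (1/((k - l : ℕ):ℝ)) := Finset.sum_image hinj
    rw [← himg]
    refine le_trans (Finset.sum_le_sum_of_subset_of_nonneg ?_ ?_)
      (sum_inv_le_one_add_log k)
    · intro j hj
      simp only [Finset.mem_image] at hj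
      obtain ⟨l, hl, rfl⟩ := hj
      simp only [Finset.mem_Icc]
      have := hF l hl; omega
    · intro i _ _; positivity
  have hharmC : ∀ F : Finset ℕ, (∀ l ∈ F, k < l ∧ l ≤ 2*k) →
      ∑ l ∈ F, (1/((l - k : ℕ):ℝ)) ≤ 1 + Real.log k := by
    intro F hF
    have hinj : ∀ x ∈ F, ∀ y ∈ F, x - k = y - k → x = y := by
      intro x hx y hy h
      have := hF x hx; have := hF y hy; omega
    have himg : ∑ j ∈ F.image (fun l => l - k), (1/(j:ℝ))
        = ∑ l ∈ F, (1/((l - k : ℕ):ℝ)) := Finset.sum_image hinj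
    rw [← himg]
    refine le_trans (Finset.sum_le_sum_of_subset_of_nonneg ?_ ?_)
      (sum_inv_le_one_add_log k)
    · intro j hj
      simp only [Finset.mem_image] at hj
      obtain ⟨l, hl, rfl⟩ := hj
      simp only [Finset.mem_Icc]
      have := hF l hl; omega
    · intro i _ _; positivity
  have hXpos : (0:ℝ) < (k:ℝ) ^ (α - β + 1) := Real.rpow_pos_of_pos hkpos _
  -- bound for g₂
  have ht₂ : ∑' l, g₂ l ≤ E * (k:ℝ) ^ (α - β + 1) * (1 + Real.log k) := by
    rw [tsum_eq_sum (s := Finset.range k)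
      (by intro l hl; simp only [Finset.mem_range, not_lt] at hl
          simp only [hg₂]; rw [if_neg (by omega)])]
    have : ∑ l ∈ Finset.range k, g₂ l
        = ∑ l ∈ (Finset.range k).filter (fun l => k < 2*l ∧ l < k),
            E * (k:ℝ) ^ (α - β + 1) * (1/((k - l : ℕ):ℝ)) := by
      rw [Finset.sum_filter]
      apply Finset.sum_congr rfl
      intro l _
      simp only [hg₂]
    rw [this, ← Finset.mul_sum]
    apply mul_le_mul_of_nonneg_left
    · apply hharmB
      intro l hl
      simp only [Finset.mem_filter] at hl
      exact hl.2.2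
    · exact mul_nonneg hEpos.le (Real.rpow_nonneg hkpos.le _)
  -- bound for g₃
  have ht₃ : ∑' l, g₃ l ≤ D * (k:ℝ) ^ (α - β + 1) * (1 + Real.log k) := by
    rw [tsum_eq_sum (s := Finset.range (2*k))
      (by intro l hl; simp only [Finset.mem_range, not_lt] at hl
          simp only [hg₃]; rw [if_neg (by omega)])]
    have : ∑ l ∈ Finset.range (2*k), g₃ l
        = ∑ l ∈ (Finset.range (2*k)).filter (fun l => k < l ∧ l < 2*k),
            D * (k:ℝ) ^ (α - β + 1) * (1/((l - k : ℕ):ℝ)) := by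
      rw [Finset.sum_filter]
      apply Finset.sum_congr rfl
      intro l _
      simp only [hg₃]
    rw [this, ← Finset.mul_sum]
    apply mul_le_mul_of_nonneg_left
    · apply hharmC
      intro l hl
      simp only [Finset.mem_filter] at hl
      exact ⟨hl.2.1, by omega⟩
    · exact mul_nonneg hDpos.le (Real.rpow_nonneg hkpos.le _)
  -- bound for g₄
  have ht₄ : ∑' l, g₄ l ≤ D / (β - 1) * (k:ℝ) ^ (α - β + 1) := by
    have hg4eq : g₄ = fun l : ℕ =>
        D * (k:ℝ) ^ α * (if 2*k ≤ l then (l:ℝ) ^ (-β) else 0) := by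
      funext l
      simp only [hg₄]
      split
      · rfl
      · rw [mul_zero]
    rw [hg4eq, tsum_mul_left]
    have htail := tail_rpow_le β hβ (2*k) (by omega)
    have hcast : ((2*k : ℕ):ℝ) - 1 = 2*(k:ℝ) - 1 := by push_cast; ring
    rw [hcast] at htail
    have hmono2 : (2*(k:ℝ) - 1) ^ (1 - β) ≤ (k:ℝ) ^ (1 - β) :=
      Real.rpow_le_rpow_of_nonpos hkpos (by linarith) (by linarith)
    have htail2 : ∑' ℓ : ℕ, (if 2*k ≤ ℓ then (ℓ:ℝ) ^ (-β) else 0)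
        ≤ (k:ℝ) ^ (1 - β) / (β - 1) := by
      apply le_trans htail
      exact (div_le_div_iff_of_pos_right (by linarith : (0:ℝ) < β - 1)).mpr hmono2
    have hkk : (k:ℝ) ^ α * (k:ℝ) ^ (1 - β) = (k:ℝ) ^ (α - β + 1) := by
      rw [← Real.rpow_add hkpos, show α + (1 - β) = α - β + 1 by ring]
    calc D * (k:ℝ) ^ α * ∑' ℓ : ℕ, (if 2*k ≤ ℓ then (ℓ:ℝ) ^ (-β) else 0)
        ≤ D * (k:ℝ) ^ α * ((k:ℝ) ^ (1 - β) / (β - 1)) :=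
          mul_le_mul_of_nonneg_left htail2
            (mul_nonneg hDpos.le (Real.rpow_nonneg hkpos.le _))
      _ = D / (β - 1) * (k:ℝ) ^ (α - β + 1) := by rw [← hkk]; ring
  -- final assembly
  have hgoal_sum : Summable (fun l : ℕ =>
      if 1 ≤ l ∧ l ≠ k then (l : ℝ) ^ (-β) / |κ k - κ l| else 0) := hf ▸ hfsum
  have hXlognn : 0 ≤ (k:ℝ) ^ (α - β + 1) * Real.log k :=
    mul_nonneg hXpos.le hlogkpos.le
  by_cases hcase : α + 1 < β
  · -- uniform bound case
    have hεpos : 0 < ε := by rw [hε]; linarith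
    have hSsum : Summable (fun l : ℕ => if 1 ≤ l then (l:ℝ) ^ (α - β) else 0) := by
      refine Summable.of_nonneg_of_le (fun l => by positivity) (fun l => ?_)
        (Real.summable_nat_rpow.mpr (by linarith : α - β < -1))
      split
      · exact le_rfl
      · exact Real.rpow_nonneg (Nat.cast_nonneg l) _
    have ht₁ : ∑' l, g₁ l ≤ D * S := by
      have hple : ∀ l, g₁ l ≤ D * (if 1 ≤ l then (l:ℝ) ^ (α - β) else 0) := by
        intro l
        simp only [hg₁]
        by_cases h : 1 ≤ l ∧ 2*l ≤ k
        · rw [if_pos h, if_pos h.1]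
        · rw [if_neg h]
          exact mul_nonneg hDpos.le (by positivity)
      calc ∑' l, g₁ l ≤ ∑' l : ℕ, D * (if 1 ≤ l then (l:ℝ) ^ (α - β) else 0) :=
            Summable.tsum_le_tsum hple hsum₁ (hSsum.mul_left D)
        _ = D * S := by rw [tsum_mul_left, hS]
    have hbound2 : (k:ℝ) ^ (α - β + 1) * (1 + Real.log k) ≤ 1 + 1/ε := by
      have he1 : (k:ℝ) ^ (α - β + 1) ≤ 1 :=
        Real.rpow_le_one_of_one_le_of_nonpos (by linarith) (by linarith)
      have hlogle : Real.log k ≤ (k:ℝ) ^ ε / ε := Real.log_le_rpow_div hkpos.le hεpos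
      have he2 : (k:ℝ) ^ (α - β + 1) * Real.log k ≤ 1/ε := by
        have hm1 : (k:ℝ) ^ (α - β + 1) * Real.log k
            ≤ (k:ℝ) ^ (α - β + 1) * ((k:ℝ) ^ ε / ε) :=
          mul_le_mul_of_nonneg_left hlogle hXpos.le
        have hm2 : (k:ℝ) ^ (α - β + 1) * (k:ℝ) ^ ε = (k:ℝ) ^ (α - β + 1 + ε) := by
          rw [← Real.rpow_add hkpos]
        have hm3 : (k:ℝ) ^ (α - β + 1 + ε) ≤ 1 := by
          apply Real.rpow_le_one_of_one_le_of_nonpos (by linarith)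
          rw [hε]; linarith
        calc (k:ℝ) ^ (α - β + 1) * Real.log k
            ≤ (k:ℝ) ^ (α - β + 1) * ((k:ℝ) ^ ε / ε) := hm1
          _ = (k:ℝ) ^ (α - β + 1 + ε) / ε := by rw [← hm2]; ring
          _ ≤ 1/ε := (div_le_div_iff_of_pos_right hεpos).mpr hm3
      nlinarith [hXpos]
    have htot : ∑' l, f l ≤ C' := by
      have h4' : ∑' l, g₄ l ≤ D / (β - 1) * ((k:ℝ) ^ (α - β + 1) * (1 + Real.log k)) := by
        have h1le : (1:ℝ) ≤ 1 + Real.log k := by linarith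
        have := mul_le_mul_of_nonneg_left h1le
          (mul_nonneg (div_nonneg hDpos.le (by linarith : (0:ℝ) ≤ β - 1)) hXpos.le)
        calc ∑' l, g₄ l ≤ D / (β - 1) * (k:ℝ) ^ (α - β + 1) := ht₄
          _ ≤ D / (β - 1) * ((k:ℝ) ^ (α - β + 1) * (1 + Real.log k)) := by
              nlinarith [this]
      have hcomb : ∑' l, f l ≤ D * S + (E + D + D / (β - 1))
          * ((k:ℝ) ^ (α - β + 1) * (1 + Real.log k)) := by
        have h2' : ∑' l, g₂ l ≤ E * ((k:ℝ) ^ (α - β + 1) * (1 + Real.log k)) := by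
          rw [← mul_assoc]; exact ht₂
        have h3' : ∑' l, g₃ l ≤ D * ((k:ℝ) ^ (α - β + 1) * (1 + Real.log k)) := by
          rw [← mul_assoc]; exact ht₃
        nlinarith [hfle, ht₁, h2', h3', h4']
      have hterm : (E + D + D / (β - 1)) * ((k:ℝ) ^ (α - β + 1) * (1 + Real.log k))
          ≤ C₀ * (1 + 1/ε) := by
        have hco : 0 ≤ E + D + D / (β - 1) := by
          have : 0 ≤ D / (β - 1) := div_nonneg hDpos.le (by linarith)
          linarith
        have h1 : (E + D + D / (β - 1)) * ((k:ℝ) ^ (α - β + 1) * (1 + Real.log k))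
            ≤ (E + D + D / (β - 1)) * (1 + 1/ε) :=
          mul_le_mul_of_nonneg_left hbound2 hco
        have h2 : (E + D + D / (β - 1)) * (1 + 1/ε) ≤ C₀ * (1 + 1/ε) := by
          apply mul_le_mul_of_nonneg_right _ (by positivity)
          rw [hC₀]; linarith
        linarith
      have hfinal : D * S + C₀ * (1 + 1/ε) ≤ C' := by
        rw [hC']
        have h1 : C₀ * (1 + 1/ε) ≤ C₀ * (L + 1 + max (1/ε) 0) :=
          mul_le_mul_of_nonneg_left
            (by have := le_max_left (1/ε) (0:ℝ); linarith) hC₀pos.le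
        linarith
      linarith [hcomb, hterm, hfinal]
    refine ⟨⟨hgoal_sum, ?_⟩, fun _ => ?_⟩
    · have h1 : ∑' l, f l ≤ C' * (1 + (k:ℝ) ^ (α - β + 1) * Real.log k) := by
        calc ∑' l, f l ≤ C' := htot
          _ ≤ C' * (1 + (k:ℝ) ^ (α - β + 1) * Real.log k) :=
            le_mul_of_one_le_right hC'pos.le (by linarith)
      rw [← hf]; exact h1
    · rw [← hf]; exact htot
  · -- log bound case
    have hba : β ≤ α + 1 := by linarith [not_lt.mp hcase]
    have ht₁ : ∑' l, g₁ l ≤ D * (k:ℝ) ^ (α - β + 1) * (1 + Real.log k) := by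
      rw [tsum_eq_sum (s := Finset.range (k+1))
        (by intro l hl; simp only [Finset.mem_range, not_lt] at hl
            simp only [hg₁]; rw [if_neg (by omega)])]
      have hple : ∀ l ∈ Finset.range (k+1), g₁ l ≤
          (if 1 ≤ l ∧ 2*l ≤ k then D * (k:ℝ) ^ (α - β + 1) * (1/(l:ℝ)) else 0) := by
        intro l _
        simp only [hg₁]
        by_cases h : 1 ≤ l ∧ 2*l ≤ k
        · rw [if_pos h, if_pos h]
          have hlpos : (0:ℝ) < l := by exact_mod_cast h.1
          have hlk : (l:ℝ) ≤ k := by exact_mod_cast (by omega : l ≤ k)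
          have hup2 : (l:ℝ) ^ (α - β + 1) ≤ (k:ℝ) ^ (α - β + 1) :=
            Real.rpow_le_rpow hlpos.le hlk (by linarith)
          have heq : (l:ℝ) ^ (α - β) = (l:ℝ) ^ (α - β + 1) * (1/(l:ℝ)) := by
            rw [one_div, ← Real.rpow_neg_one (l:ℝ), ← Real.rpow_add hlpos,
              show α - β + 1 + (-1) = α - β by ring]
          rw [heq, mul_assoc D]
          apply mul_le_mul_of_nonneg_left _ hDpos.le
          exact mul_le_mul_of_nonneg_right hup2 (by positivity)
        · rw [if_neg h, if_neg h]
      refine le_trans (Finset.sum_le_sum hple) ?_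
      rw [← Finset.sum_filter, ← Finset.mul_sum]
      apply mul_le_mul_of_nonneg_left
      · refine le_trans (Finset.sum_le_sum_of_subset_of_nonneg ?_ ?_)
          (sum_inv_le_one_add_log k)
        · intro l hl
          simp only [Finset.mem_filter, Finset.mem_range] at hl
          simp only [Finset.mem_Icc]
          omega
        · intro i _ _; positivity
      · exact mul_nonneg hDpos.le (Real.rpow_nonneg hkpos.le _)
    have hcomb : ∑' l, f l ≤ C₀ * ((k:ℝ) ^ (α - β + 1) * (1 + Real.log k)) := by
      have h2' : ∑' l, g₂ l ≤ E * ((k:ℝ) ^ (α - β + 1) * (1 + Real.log k)) := by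
        rw [← mul_assoc]; exact ht₂
      have h3' : ∑' l, g₃ l ≤ D * ((k:ℝ) ^ (α - β + 1) * (1 + Real.log k)) := by
        rw [← mul_assoc]; exact ht₃
      have h1' : ∑' l, g₁ l ≤ D * ((k:ℝ) ^ (α - β + 1) * (1 + Real.log k)) := by
        rw [← mul_assoc]; exact ht₁
      have h4' : ∑' l, g₄ l ≤ D / (β - 1) * ((k:ℝ) ^ (α - β + 1) * (1 + Real.log k)) := by
        have h1le : (1:ℝ) ≤ 1 + Real.log k := by linarith
        have hnn : 0 ≤ D / (β - 1) * (k:ℝ) ^ (α - β + 1) :=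
          mul_nonneg (div_nonneg hDpos.le (by linarith)) hXpos.le
        calc ∑' l, g₄ l ≤ D / (β - 1) * (k:ℝ) ^ (α - β + 1) := ht₄
          _ ≤ D / (β - 1) * ((k:ℝ) ^ (α - β + 1) * (1 + Real.log k)) := by
              nlinarith [mul_le_mul_of_nonneg_left h1le hnn]
      rw [hC₀]
      nlinarith [hfle, h1', h2', h3', h4']
    have hC₀L : C₀ * L ≤ C' := by
      rw [hC']
      nlinarith [mul_nonneg hC₀pos.le (by linarith : (0:ℝ) ≤ 1 + max (1/ε) 0),
        mul_nonneg hDpos.le hSnn]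
    have hfin : ∑' l, f l ≤ C' * (1 + (k:ℝ) ^ (α - β + 1) * Real.log k) := by
      have hstep : (k:ℝ) ^ (α - β + 1) * (1 + Real.log k)
          ≤ (k:ℝ) ^ (α - β + 1) * (L * Real.log k) :=
        mul_le_mul_of_nonneg_left h1logk hXpos.le
      calc ∑' l, f l ≤ C₀ * ((k:ℝ) ^ (α - β + 1) * (1 + Real.log k)) := hcomb
        _ ≤ C₀ * ((k:ℝ) ^ (α - β + 1) * (L * Real.log k)) :=
            mul_le_mul_of_nonneg_left hstep hC₀pos.le
        _ = (C₀ * L) * ((k:ℝ) ^ (α - β + 1) * Real.log k) := by ring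
        _ ≤ C' * ((k:ℝ) ^ (α - β + 1) * Real.log k) :=
            mul_le_mul_of_nonneg_right hC₀L hXlognn
        _ ≤ C' * (1 + (k:ℝ) ^ (α - β + 1) * Real.log k) := by
            nlinarith [hC'pos]
    exact ⟨⟨hgoal_sum, by rw [← hf]; exact hfin⟩, fun h => absurd h hcase⟩
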